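/- Let V₁,...,V_d (d > n) be vector fields on an n-manifold with (V₁,...,V_n) a frame, V_a = ∑ᵢ f_{i,a} Vᵢ for a > n, and (αᵢ) the dual coframe. For λ ∈ {1,...,d}, a form η_λ = ∑ᵢ X_{i,λ} Λᵢ satisfies ι_{V_λ} η_λ = 0 if and only if f_{i,λ} X_{j,λ} - f_{j,λ} X_{i,λ} = 0 for all i < j (where f_{i,j} = δ_{ij} for j ≤ n). In particular, for λ = a > n this is equivalent to X_{i,a} = f_{i,a} X_{n,a} for all i, assuming f_{n,a} = 1, and for λ = j ≤ n it is equivalent to X_{i,j} = 0 for all i ≠ j. -/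

import Mathlib

lemma aux_det15 {K : Type*} [Field K] (m : ℕ) (x y : Fin (m + 2) → K) :
    (∀ g : Fin m → (Fin (m + 2) → K),
      Matrix.det (Matrix.of (Fin.cons x (Fin.cons y g)) : Matrix (Fin (m+2)) (Fin (m+2)) K) = 0)
    ↔ ∀ i j : Fin (m + 2), i < j → y i * x j - y j * x i = 0 := by
  constructor
  · intro h i j hij
    by_contra hne
    have hli : LinearIndependent K ![x, y] := by
      rw [LinearIndependent.pair_iff]
      intro s t hst
      have h1 : s * x i + t * y i = 0 := by
        have := congrFun hst i; simpa using this
      have h2 : s * x j + t * y j = 0 := by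
        have := congrFun hst j; simpa using this
      constructor
      · have hs : s * (y i * x j - y j * x i) = 0 := by linear_combination y i * h2 - y j * h1
        rcases mul_eq_zero.mp hs with hs | hs
        · exact hs
        · exact absurd hs hne
      · have ht : t * (y i * x j - y j * x i) = 0 := by linear_combination x j * h1 - x i * h2
        rcases mul_eq_zero.mp ht with ht | ht
        · exact ht
        · exact absurd ht hne
    have hxy : x ≠ y := by
      intro e
      have := hli.injective (R := K)
      exact absurd (this (show ![x,y] 0 = ![x,y] 1 by simp [e])) (by simp)
    classical
    have hs : LinearIndepOn K id (Set.range ![x, y]) :=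
      hli.linearIndepOn_id
    set S := hs.extend (Set.subset_univ _) with hS
    let B0 : Module.Basis S K (Fin (m + 2) → K) := Module.Basis.extend hs
    haveI : Fintype S := FiniteDimensional.fintypeBasisIndex B0
    have hxS : x ∈ S := hs.subset_extend _ ⟨0, rfl⟩
    have hyS : y ∈ S := hs.subset_extend _ ⟨1, rfl⟩
    have hcard : Fintype.card (Fin (m + 2)) = Fintype.card S := by
      rw [Fintype.card_fin, ← Module.finrank_eq_card_basis B0, Module.finrank_pi]
      simp
    let e0 : Fin (m + 2) ≃ S := Fintype.equivOfCardEq hcard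
    set a : Fin (m + 2) := e0.symm ⟨x, hxS⟩ with ha
    set b : Fin (m + 2) := e0.symm ⟨y, hyS⟩ with hb
    have hab : a ≠ b := by
      intro e
      apply hxy
      have := congrArg (fun z => (e0 z : Fin (m+2) → K)) e
      simpa [ha, hb] using this
    set b' : Fin (m + 2) := Equiv.swap 0 a b with hb'
    have hb'ne0 : b' ≠ 0 := by
      intro e
      apply hab
      have := congrArg (Equiv.swap 0 a) e
      rw [hb', Equiv.swap_apply_self, Equiv.swap_apply_left] at this
      exact this.symm ▸ rfl
    set σ : Equiv.Perm (Fin (m + 2)) := (Equiv.swap 1 b').trans (Equiv.swap 0 a) with hσ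
    have hσ0 : σ 0 = a := by
      have : Equiv.swap 1 b' 0 = 0 :=
        Equiv.swap_apply_of_ne_of_ne Fin.zero_ne_one (Ne.symm hb'ne0)
      simp [hσ, Equiv.trans_apply, this]
    have hσ1 : σ 1 = b := by
      have h1 : Equiv.swap 1 b' 1 = b' := Equiv.swap_apply_left _ _
      have h2 : Equiv.swap 0 a b' = b := by rw [hb', Equiv.swap_apply_self]
      simp [hσ, Equiv.trans_apply, h1, h2]
    let B : Module.Basis (Fin (m + 2)) K (Fin (m + 2) → K) :=
      B0.reindex ((σ.trans e0).symm)
    have hBapp : ∀ k, B k = B0 (e0 (σ k)) := by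
      intro k
      simp [B, Module.Basis.reindex_apply]
    have hB0 : B 0 = x := by
      rw [hBapp, hσ0, ha, Equiv.apply_symm_apply]
      exact Module.Basis.extend_apply_self hs _
    have hB1 : B 1 = y := by
      rw [hBapp, hσ1, hb, Equiv.apply_symm_apply]
      exact Module.Basis.extend_apply_self hs _
    have hrow : ∀ k : Fin (m + 2),
        (Fin.cons x (Fin.cons y (fun q => B q.succ.succ)) : Fin (m + 2) → Fin (m + 2) → K) k
          = B k := by
      intro k
      refine Fin.cases ?_ (fun k' => ?_) k
      · simpa using hB0.symm
      · refine Fin.cases ?_ (fun k'' => ?_) k'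
        · rw [Fin.cons_succ, Fin.cons_zero, Fin.succ_zero_eq_one, hB1]
        · rw [Fin.cons_succ, Fin.cons_succ]
    have hdet := h (fun q => B q.succ.succ)
    have hM : Matrix.transpose
          (Matrix.of (Fin.cons x (Fin.cons y fun q => B q.succ.succ))
            : Matrix (Fin (m+2)) (Fin (m+2)) K)
        = (Pi.basisFun K (Fin (m + 2))).toMatrix B := by
      ext i k
      rw [Matrix.transpose_apply, Matrix.of_apply, hrow k, Module.Basis.toMatrix_apply,
        Pi.basisFun_repr]
    have hne0 : ((Pi.basisFun K (Fin (m + 2))).toMatrix B).det ≠ 0 := by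
      have hu := (Pi.basisFun K (Fin (m + 2))).isUnit_det B
      rw [Module.Basis.det_apply] at hu
      exact hu.ne_zero
    apply hne0
    rw [← hM, Matrix.det_transpose]
    exact hdet
  · intro h g
    by_cases hy : ∀ k, y k = 0
    · apply Matrix.det_eq_zero_of_row_eq_zero 1
      intro i
      rw [show (1 : Fin (m + 2)) = Fin.succ 0 from (Fin.succ_zero_eq_one).symm]
      simp [hy]
    · push_neg at hy
      obtain ⟨k, hk⟩ := hy
      have hx : ∀ i, x i = x k / y k * y i := by
        intro i
        rcases lt_trichotomy i k with hik | rfl | hki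
        · have := h i k hik; field_simp; linear_combination -this
        · field_simp
        · have := h k i hki; field_simp; linear_combination this
      rw [← Matrix.det_updateRow_add_smul_self _ (show (0 : Fin (m+2)) ≠ 1 from Fin.zero_ne_one) (-(x k / y k))]
      apply Matrix.det_eq_zero_of_row_eq_zero 0
      intro i
      rw [Matrix.updateRow_self]
      have h1 : (Matrix.of (Fin.cons x (Fin.cons y g)) : Matrix (Fin (m+2)) (Fin (m+2)) K) 1 i = y i := by
        rw [show (1 : Fin (m + 2)) = Fin.succ 0 from (Fin.succ_zero_eq_one).symm]
        simp
      simp only [Pi.add_apply, Pi.smul_apply, smul_eq_mul, h1, Matrix.of_apply, Fin.cons_zero]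
      rw [hx i]; ring

/-- Equations (I) of Lemma 1 (semi-basicity): with `n = m+2`, frame `(V₁,...,V_n)` with dual
coframe `α`, `V_λ = ∑ᵢ f_{i,λ} Vᵢ` (with `f_{i,j} = δ_{ij}` for `j ≤ n`), and
`η_λ = ∑ᵢ X_{i,λ} Λᵢ` where `Λᵢ = (-1)^i α₀∧...∧α̂ᵢ∧...` (realized as a determinant),
the interior product `ι_{V_λ} η_λ` vanishes iff `f_{i,λ}X_{j,λ} - f_{j,λ}X_{i,λ} = 0` for all
`i < j`.  In particular, for `λ ≥ n` (with `f_{n,λ} = 1`) this is equivalent to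
`X_{i,λ} = f_{i,λ} X_{n,λ}` for all `i`, and for `λ < n` to `X_{i,λ} = 0` for `i ≠ λ`. -/
theorem stmt15 {K W : Type*} [Field K] [AddCommGroup W] [Module K W]
    (m d : ℕ) (hd : m + 2 < d)
    (V : Fin d → W)
    (α : Fin (m + 2) → (W →ₗ[K] K))
    (hdual : ∀ i j : Fin (m + 2),
      α i (V (Fin.castLE hd.le j)) = if i = j then 1 else 0)
    (f : Fin (m + 2) → Fin d → K)
    (hδ : ∀ i j : Fin (m + 2),
      f i (Fin.castLE hd.le j) = if i = j then 1 else 0)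
    (hf : ∀ lam : Fin d, V lam = ∑ i, f i lam • V (Fin.castLE hd.le i))
    (X : Fin (m + 2) → Fin d → K) (lam : Fin d) :
    ((∀ w : Fin m → W,
        ∑ i : Fin (m + 2), X i lam * ((-1 : K) ^ (i : ℕ) *
          Matrix.det (Matrix.of fun p q : Fin (m + 1) =>
            α (i.succAbove p) ((Fin.cons (V lam) w : Fin (m + 1) → W) q))) = 0)
      ↔ (∀ i j : Fin (m + 2), i < j → f i lam * X j lam - f j lam * X i lam = 0))
    ∧ (m + 2 ≤ (lam : ℕ) → f (Fin.last (m + 1)) lam = 1 →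
        ((∀ i j : Fin (m + 2), i < j → f i lam * X j lam - f j lam * X i lam = 0)
          ↔ ∀ i, X i lam = f i lam * X (Fin.last (m + 1)) lam))
    ∧ ((lam : ℕ) < m + 2 →
        ((∀ i j : Fin (m + 2), i < j → f i lam * X j lam - f j lam * X i lam = 0)
          ↔ ∀ i : Fin (m + 2), (i : ℕ) ≠ (lam : ℕ) → X i lam = 0)) := by
  classical
  have hαV : ∀ k : Fin (m + 2), α k (V lam) = f k lam := by
    intro k
    rw [hf lam, map_sum]
    simp [hdual, mul_ite, Finset.sum_ite_eq]
  have hαw : ∀ (c : Fin (m + 2) → K) (k : Fin (m + 2)),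
      α k (∑ j, c j • V (Fin.castLE hd.le j)) = c k := by
    intro c k
    rw [map_sum]
    simp [hdual, mul_ite, Finset.sum_ite_eq]
  have key : ∀ w : Fin m → W,
      (∑ i : Fin (m + 2), X i lam * ((-1 : K) ^ (i : ℕ) *
        Matrix.det (Matrix.of fun p q : Fin (m + 1) =>
          α (i.succAbove p) ((Fin.cons (V lam) w : Fin (m + 1) → W) q))))
      = Matrix.det (Matrix.of (Fin.cons (fun i => X i lam)
          (Fin.cons (fun i => f i lam) (fun q i => α i (w q))))
          : Matrix (Fin (m + 2)) (Fin (m + 2)) K) := by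
    intro w
    rw [← Matrix.det_transpose, Matrix.det_succ_column_zero]
    refine Finset.sum_congr rfl fun i _ => ?_
    have hsub : (Matrix.transpose (Matrix.of (Fin.cons (fun i => X i lam)
          (Fin.cons (fun i => f i lam) (fun q i => α i (w q))))
          : Matrix (Fin (m + 2)) (Fin (m + 2)) K)).submatrix i.succAbove Fin.succ
        = Matrix.of fun p q : Fin (m + 1) =>
            α (i.succAbove p) ((Fin.cons (V lam) w : Fin (m + 1) → W) q) := by
      ext p q
      refine Fin.cases ?_ (fun q' => ?_) q
      · simp [hαV]
      · simp
    rw [hsub]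
    simp only [Matrix.transpose_apply, Matrix.of_apply, Fin.cons_zero]
    ring
  refine ⟨?_, ?_, ?_⟩
  · refine Iff.trans ?_ (aux_det15 m (fun i => X i lam) (fun i => f i lam))
    constructor
    · intro h g
      have hw := h (fun q => ∑ j, g q j • V (Fin.castLE hd.le j))
      rw [key] at hw
      have hg : (fun q i => α i (∑ j, g q j • V (Fin.castLE hd.le j))) = g :=
        funext fun q => funext fun i => hαw (g q) i
      rw [hg] at hw
      exact hw
    · intro h w
      rw [key]
      exact h fun q i => α i (w q)
  · intro _ hlast
    constructor
    · intro h i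
      rcases eq_or_lt_of_le (Fin.le_last i) with he | hlt'
      · rw [he, hlast]; ring
      · have := h i (Fin.last (m + 1)) hlt'
        rw [hlast] at this
        linear_combination -this
    · intro h i j _
      rw [h i, h j]
      ring
  · intro hlt
    set lam' : Fin (m + 2) := ⟨(lam : ℕ), hlt⟩ with hlam'
    have hcast : Fin.castLE hd.le lam' = lam := by
      apply Fin.ext
      rfl
    have hfδ : ∀ i, f i lam = if i = lam' then 1 else 0 := by
      intro i
      rw [← hcast]
      exact hδ i lam'
    constructor
    · intro h i hi
      have hine : i ≠ lam' := by
        intro e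
        exact hi (by rw [e])
      rcases lt_or_gt_of_ne hine with hlt' | hgt
      · have := h i lam' hlt'
        rw [hfδ, hfδ] at this
        simp only [if_neg hine, if_pos rfl, if_true] at this
        linear_combination -this
      · have := h lam' i hgt
        rw [hfδ, hfδ] at this
        simp only [if_neg hine, if_pos rfl, if_true] at this
        linear_combination this
    · intro h i j hij
      rw [hfδ, hfδ]
      by_cases hi : i = lam' <;> by_cases hj : j = lam'
      · exact absurd (hi.trans hj.symm) hij.ne
      · have hXj : X j lam = 0 := h j (fun e => hj (Fin.ext e))
        simp [hi, hj, hXj]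
      · have hXi : X i lam = 0 := h i (fun e => hi (Fin.ext e))
        simp [hi, hj, hXi]
      · simp [hi, hj]
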